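/- Let a, b ∈ ℝ with a ≥ 0 and let F = F_{a,b}. Then F has exactly one fixed point, every periodic point p of F satisfies F^3(p) = p (so every periodic orbit has minimal period 1 or 3), and the set of all periodic points of F has at most 7 elements. -/
import Mathlib


/-- The piecewise linear map `F_{a,b}(x,y) = (|x| - y + a, x - |y| + b)`. -/
noncomputable def F (a b : ℝ) : ℝ × ℝ → ℝ × ℝ :=
  fun p => (|p.1| - p.2 + a, p.1 - |p.2| + b)

set_option maxHeartbeats 1000000 in
lemma key3 (a b x y : ℝ) (ha : 0 ≤ a) (hR : a - b ≤ x - y) :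
    (0 ≤ y → 0 ≤ (|(|x| - y + a)| - (x - |y| + b) + a) - |((|x| - y + a) - |(x - |y| + b)| + b)| + b) ∧
    (y < 0 → y < (|(|x| - y + a)| - (x - |y| + b) + a) - |((|x| - y + a) - |(x - |y| + b)| + b)| + b) := by
  rcases abs_cases x with ⟨e1, s1⟩ | ⟨e1, s1⟩ <;>
  rcases abs_cases y with ⟨e2, s2⟩ | ⟨e2, s2⟩ <;>
  rcases abs_cases (|x| - y + a) with ⟨e3, s3⟩ | ⟨e3, s3⟩ <;>
  rcases abs_cases (x - |y| + b) with ⟨e4, s4⟩ | ⟨e4, s4⟩ <;>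
  rcases abs_cases (|(|x| - y + a)| - (x - |y| + b) + a) with ⟨e5, s5⟩ | ⟨e5, s5⟩ <;>
  rcases abs_cases ((|x| - y + a) - |(x - |y| + b)| + b) with ⟨e6, s6⟩ | ⟨e6, s6⟩ <;>
  constructor <;> intro hy <;> linarith

/-- periodicity extension -/
lemma perk {α : Type*} (v : ℕ → α) (N : ℕ) (hv : ∀ n, v (n + N) = v n) :
    ∀ k n, v (n + k * N) = v n := by
  intro k
  induction k with
  | zero => simp
  | succ k ih =>
    intro n
    have e : n + (k+1) * N = (n + k * N) + N := by ring
    rw [e, hv, ih]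

lemma per_all {α : Type*} (v : ℕ → α) (N : ℕ) (hN : 1 ≤ N) (hv : ∀ n, v (n + N) = v n)
    (P : α → Prop) (h : ∀ n, P (v (n + 2))) : ∀ n, P (v n) := by
  intro n
  have h1 : v n = v (n + 2 * N) := (perk v N hv 2 n).symm
  have e : n + 2 * N = (n + 2 * N - 2) + 2 := by omega
  rw [h1, e]
  exact h _

lemma sum_shift (N : ℕ) (f : ℕ → ℝ) (hf : f N = f 0) :
    ∑ i ∈ Finset.range N, f (i + 1) = ∑ i ∈ Finset.range N, f i := by
  have h1 := Finset.sum_range_succ' f N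
  have h2 := Finset.sum_range_succ f N
  rw [h1] at h2
  linarith

/-- all-negative case: expanding linear recurrence has no nonzero periodic solution -/
lemma allneg (w : ℕ → ℝ) (N : ℕ) (hN : 1 ≤ N)
    (hw : ∀ n, w (n + 2) = -2 * w (n + 1) - 2 * w n)
    (hper : ∀ n, w (n + N) = w n) : ∀ n, w n = 0 := by
  have hN0 : w N = w 0 := by simpa using hper 0
  have hN1 : w (N + 1) = w 1 := by
    have := hper 1
    simpa [Nat.add_comm] using this
  set S2 := ∑ i ∈ Finset.range N, (w i) ^ 2 with hS2
  set S1 := ∑ i ∈ Finset.range N, w i * w (i + 1) with hS1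
  have e2 : ∑ i ∈ Finset.range N, w (i + 1) ^ 2 = S2 :=
    sum_shift N (fun i => w i ^ 2) (by show w N ^ 2 = w 0 ^ 2; rw [hN0])
  have e1 : ∑ i ∈ Finset.range N, w (i + 1) * w (i + 2) = S1 :=
    sum_shift N (fun i => w i * w (i + 1)) (by show w N * w (N+1) = w 0 * w 1; rw [hN0, hN1])
  have e3 : ∑ i ∈ Finset.range N, w (i + 2) ^ 2 = S2 := by
    have := sum_shift N (fun i => w (i + 1) ^ 2) (by show w (N+1) ^ 2 = w (0+1) ^ 2; rw [hN1])
    simpa [e2] using this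
  -- expand using recurrence
  have E1 : S1 = -2 * S2 - 2 * S1 := by
    have : ∑ i ∈ Finset.range N, w (i + 1) * w (i + 2)
        = ∑ i ∈ Finset.range N, (-2 * w (i + 1) ^ 2 - 2 * (w i * w (i + 1))) := by
      refine Finset.sum_congr rfl fun i _ => by rw [hw i]; ring
    rw [this] at e1
    rw [Finset.sum_sub_distrib, ← Finset.mul_sum, ← Finset.mul_sum, e2] at e1
    linarith
  have E2 : S2 = 8 * S2 + 8 * S1 := by
    have : ∑ i ∈ Finset.range N, w (i + 2) ^ 2
        = ∑ i ∈ Finset.range N, (4 * w (i + 1) ^ 2 + 8 * (w i * w (i + 1)) + 4 * w i ^ 2) := by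
      refine Finset.sum_congr rfl fun i _ => by rw [hw i]; ring
    rw [this] at e3
    rw [Finset.sum_add_distrib, Finset.sum_add_distrib, ← Finset.mul_sum, ← Finset.mul_sum,
      ← Finset.mul_sum, e2] at e3
    linarith
  have hS2z : S2 = 0 := by linarith
  have hzero : ∀ i ∈ Finset.range N, (w i) ^ 2 = 0 := by
    rw [← Finset.sum_eq_zero_iff_of_nonneg (fun i _ => sq_nonneg (w i))]
    exact hS2z.symm ▸ rfl
  have hlt : ∀ i, i < N → w i = 0 := by
    intro i hi
    have := hzero i (Finset.mem_range.mpr hi)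
    exact pow_eq_zero_iff (by norm_num) |>.mp this
  intro n
  have h1 : w n = w (n % N + n / N * N) := by rw [Nat.mod_add_div']
  rw [h1, perk w N hper (n / N) (n % N)]
  exact hlt _ (Nat.mod_lt n hN)

/-- from an explicitly 3-periodic tail, classify the whole periodic sequence -/
lemma tail_classify (u : ℕ → ℝ) (N : ℕ) (hN : 1 ≤ N) (hper : ∀ n, u (n + N) = u n)
    (m : ℕ) (v0 v1 v2 : ℝ)
    (htail : ∀ k, u (m + 3*k) = v0 ∧ u (m + 3*k + 1) = v1 ∧ u (m + 3*k + 2) = v2) :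
    (∀ n, u (n + 3) = u n) ∧
    ((u 0 = v0 ∧ u 1 = v1) ∨ (u 0 = v1 ∧ u 1 = v2) ∨ (u 0 = v2 ∧ u 1 = v0)) := by
  have key : ∀ j, m ≤ j →
      ((u j = v0 ∧ u (j+1) = v1) ∨ (u j = v1 ∧ u (j+1) = v2) ∨ (u j = v2 ∧ u (j+1) = v0))
      ∧ u (j + 3) = u j := by
    intro j hj
    obtain ⟨r, rfl⟩ : ∃ r, j = m + r := ⟨j - m, by omega⟩
    have h3 : r % 3 = 0 ∨ r % 3 = 1 ∨ r % 3 = 2 := by omega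
    have hq := (Nat.div_add_mod r 3).symm
    set q := r / 3 with hqdef
    obtain h0 := htail q
    obtain h1 := htail (q+1)
    rcases h3 with h|h|h
    · have e0 : m + r = m + 3*q := by omega
      have e1 : m + r + 1 = m + 3*q + 1 := by omega
      have e3 : m + r + 3 = m + 3*(q+1) := by omega
      refine ⟨Or.inl ⟨by rw [e0]; exact h0.1, by rw [e1]; exact h0.2.1⟩, ?_⟩
      rw [e3, e0, h1.1, h0.1]
    · have e0 : m + r = m + 3*q + 1 := by omega
      have e1 : m + r + 1 = m + 3*q + 2 := by omega
      have e3 : m + r + 3 = m + 3*(q+1) + 1 := by omega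
      refine ⟨Or.inr (Or.inl ⟨by rw [e0]; exact h0.2.1, by rw [e1]; exact h0.2.2⟩), ?_⟩
      rw [e3, e0, h1.2.1, h0.2.1]
    · have e0 : m + r = m + 3*q + 2 := by omega
      have e1 : m + r + 1 = m + 3*(q+1) := by omega
      have e3 : m + r + 3 = m + 3*(q+1) + 2 := by omega
      refine ⟨Or.inr (Or.inr ⟨by rw [e0]; exact h0.2.2, by rw [e1]; exact h1.1⟩), ?_⟩
      rw [e3, e0, h1.2.2, h0.2.2]
  have hge : m ≤ (m+1) * N := by
    calc m ≤ m + 1 := by omega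
    _ = (m+1) * 1 := by ring
    _ ≤ (m+1) * N := Nat.mul_le_mul_left _ hN
  constructor
  · intro n
    have hge2 : m ≤ n + (m+1) * N := le_trans hge (by omega)
    have e : n + 3 + (m+1)*N = (n + (m+1)*N) + 3 := by ring
    calc u (n+3) = u (n + 3 + (m+1)*N) := (perk u N hper _ _).symm
      _ = u ((n + (m+1)*N) + 3) := by rw [e]
      _ = u (n + (m+1)*N) := (key _ hge2).2
      _ = u n := perk u N hper _ _
  · have p0 : u 0 = u ((m+1)*N) := by
      have := perk u N hper (m+1) 0
      simpa using this.symm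
    have p1 : u 1 = u ((m+1)*N + 1) := by
      have := perk u N hper (m+1) 1
      rw [Nat.add_comm ((m+1)*N) 1]
      exact this.symm
    have := (key ((m+1)*N) hge).1
    rw [← p0, ← p1] at this
    exact this

/-- classification of periodic solutions of `u (n+2) = |u (n+1)| - u (n+1) + |u n| - u n + c` -/
lemma useq (c : ℝ) (u : ℕ → ℝ) (N : ℕ) (hN : 1 ≤ N)
    (hrec : ∀ n, u (n + 2) = |u (n + 1)| - u (n + 1) + |u n| - u n + c)
    (hper : ∀ n, u (n + N) = u n) :
    (∀ n, u (n + 3) = u n) ∧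
    ((0 ≤ c ∧ u 0 = c ∧ u 1 = c) ∨
     (c < 0 ∧ ((u 0 = c ∧ u 1 = -c) ∨ (u 0 = -c ∧ u 1 = -c) ∨ (u 0 = -c ∧ u 1 = c) ∨
               (u 0 = -c/3 ∧ u 1 = c/3) ∨ (u 0 = c/3 ∧ u 1 = c/3) ∨ (u 0 = c/3 ∧ u 1 = -c/3) ∨
               (u 0 = c/5 ∧ u 1 = c/5)))) := by
  rcases le_or_gt 0 c with hc | hc
  · -- c ≥ 0 : the sequence is constant c
    have h2 : ∀ n, c ≤ u (n + 2) := by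
      intro n
      rw [hrec n]
      have := le_abs_self (u (n+1))
      have := le_abs_self (u n)
      linarith
    have hall : ∀ n, c ≤ u n := by
      intro n
      have h1 : u n = u (n + 2 * N) := (perk u N hper 2 n).symm
      have e : n + 2 * N = (n + 2 * N - 2) + 2 := by omega
      rw [h1, e]
      exact h2 _
    have hconst2 : ∀ n, u (n + 2) = c := by
      intro n
      have ha1 : |u (n+1)| = u (n+1) := abs_of_nonneg (le_trans hc (hall _))
      have ha0 : |u n| = u n := abs_of_nonneg (le_trans hc (hall _))
      rw [hrec n, ha1, ha0]; ring
    have hconst : ∀ n, u n = c := by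
      intro n
      have h1 : u n = u (n + 2 * N) := (perk u N hper 2 n).symm
      have e : n + 2 * N = (n + 2 * N - 2) + 2 := by omega
      rw [h1, e]
      exact hconst2 _
    exact ⟨fun n => by rw [hconst, hconst], Or.inl ⟨hc, hconst 0, hconst 1⟩⟩
  · -- c < 0
    by_cases hpos : ∃ n, 0 ≤ u n
    · by_cases hdp : ∃ m, 0 ≤ u m ∧ 0 ≤ u (m + 1)
      · -- double plus: collapse to the cycle (c, -c, -c)
        obtain ⟨m, hm0, hm1⟩ := hdp
        have tail : ∀ k, u (m+2 + 3*k) = c ∧ u (m+2 + 3*k + 1) = -c ∧ u (m+2 + 3*k + 2) = -c := by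
          intro k
          induction k with
          | zero =>
            have habs0 : |u m| = u m := abs_of_nonneg hm0
            have habs1 : |u (m+1)| = u (m+1) := abs_of_nonneg hm1
            have h2 : u (m+2) = c := by have h := hrec m; rw [habs0, habs1] at h; linarith
            have h3 : u (m+3) = -c := by
              have h := hrec (m+1)
              simp only [show m+1+2 = m+3 from by omega, show m+1+1 = m+2 from by omega] at h
              rw [h2, abs_of_neg hc, habs1] at h
              linarith
            have h4 : u (m+4) = -c := by
              have h := hrec (m+2)
              simp only [show m+2+2 = m+4 from by omega, show m+2+1 = m+3 from by omega] at h
              rw [h2, h3, abs_of_nonneg (by linarith : (0:ℝ) ≤ -c), abs_of_neg hc] at h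
              linarith
            constructor
            · simpa using h2
            constructor
            · simp only [show m+2+3*0+1 = m+3 from by omega]; exact h3
            · simp only [show m+2+3*0+2 = m+4 from by omega]; exact h4
          | succ k ih =>
            obtain ⟨i0, i1, i2⟩ := ih
            set A := m + 2 + 3*k with hA
            have j3 : u (A + 3) = c := by
              have h := hrec (A+1)
              simp only [show A+1+2 = A+3 from by omega, show A+1+1 = A+2 from by omega] at h
              rw [i2, i1, abs_of_nonneg (by linarith : (0:ℝ) ≤ -c)] at h
              linarith
            have j4 : u (A + 4) = -c := by
              have h := hrec (A+2)
              simp only [show A+2+2 = A+4 from by omega, show A+2+1 = A+3 from by omega] at h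
              rw [i2, j3, abs_of_neg hc, abs_of_nonneg (by linarith : (0:ℝ) ≤ -c)] at h
              linarith
            have j5 : u (A + 5) = -c := by
              have h := hrec (A+3)
              simp only [show A+3+2 = A+5 from by omega, show A+3+1 = A+4 from by omega] at h
              rw [j3, j4, abs_of_neg hc, abs_of_nonneg (by linarith : (0:ℝ) ≤ -c)] at h
              linarith
            refine ⟨?_, ?_, ?_⟩
            · simp only [show m+2+3*(k+1) = A+3 from by omega]; exact j3
            · simp only [show m+2+3*(k+1)+1 = A+4 from by omega]; exact j4
            · simp only [show m+2+3*(k+1)+2 = A+5 from by omega]; exact j5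
        obtain ⟨g3, gp⟩ := tail_classify u N hN hper (m+2) c (-c) (-c) tail
        exact ⟨g3, Or.inr ⟨hc, by tauto⟩⟩
      · -- no double plus, but some nonnegative value: cycle (c/3, c/3, -c/3)
        have hdp' : ∀ m, 0 ≤ u m → u (m+1) < 0 := by
          intro m hm
          by_contra h
          push_neg at h
          exact hdp ⟨m, hm, h⟩
        have struct : ∀ m, 0 ≤ u m → u (m+1) < 0 ∧ u (m+2) < 0 ∧ 0 ≤ u (m+3) := by
          intro m hm
          have h1 : u (m+1) < 0 := hdp' m hm
          have habsm : |u m| = u m := abs_of_nonneg hm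
          have habs1 : |u (m+1)| = -u (m+1) := abs_of_neg h1
          have hm2 : u (m+2) = -2 * u (m+1) + c := by
            have h := hrec m; rw [habsm, habs1] at h; linarith
          have h2 : u (m+2) < 0 := by
            by_contra h2'
            push_neg at h2'
            have h3' : u (m+3) < 0 := hdp' (m+2) h2'
            have h := hrec (m+1)
            simp only [show m+1+2 = m+3 from by omega, show m+1+1 = m+2 from by omega] at h
            rw [abs_of_nonneg h2', habs1] at h
            linarith
          have h3 : 0 ≤ u (m+3) := by
            by_contra h3'
            push_neg at h3'
            have habs2 : |u (m+2)| = -u (m+2) := abs_of_neg h2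
            have hm3 : u (m+3) = 2 * u (m+1) - c := by
              have h := hrec (m+1)
              simp only [show m+1+2 = m+3 from by omega, show m+1+1 = m+2 from by omega] at h
              rw [habs2, habs1] at h
              linarith
            have habs3 : |u (m+3)| = -u (m+3) := abs_of_neg h3'
            have hm4 : u (m+4) = c := by
              have h := hrec (m+2)
              simp only [show m+2+2 = m+4 from by omega, show m+2+1 = m+3 from by omega] at h
              rw [habs3, habs2] at h
              linarith
            have habs4 : |u (m+4)| = -u (m+4) := by rw [hm4]; exact abs_of_neg hc
            have hm5 : u (m+5) = -4 * u (m+1) + c := by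
              have h := hrec (m+3)
              simp only [show m+3+2 = m+5 from by omega, show m+3+1 = m+4 from by omega] at h
              rw [habs4, habs3] at h
              linarith
            have h5pos : 0 ≤ u (m+5) := by linarith
            have h6 : u (m+6) = -c := by
              have h := hrec (m+4)
              simp only [show m+4+2 = m+6 from by omega, show m+4+1 = m+5 from by omega] at h
              rw [abs_of_nonneg h5pos, habs4] at h
              linarith
            have := hdp' (m+5) h5pos
            simp only [show m+5+1 = m+6 from by omega] at this
            linarith
          exact ⟨h1, h2, h3⟩
        obtain ⟨n₀, hn₀⟩ := hpos
        have pattern : ∀ k, 0 ≤ u (n₀ + 3*k) := by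
          intro k
          induction k with
          | zero => simpa using hn₀
          | succ k ih =>
            have := (struct _ ih).2.2
            simp only [show n₀+3*k+3 = n₀+3*(k+1) from by omega] at this
            exact this
        -- the value two steps after each plus satisfies r' = 4r - c
        have qeq : ∀ k, u (n₀+3*k+4) = -2 * u (n₀+3*k+2) + c := by
          intro k
          obtain ⟨h1, h2, h3⟩ := struct (n₀+3*k) (pattern k)
          have h := hrec (n₀+3*k+2)
          simp only [show n₀+3*k+2+2 = n₀+3*k+4 from by omega,
            show n₀+3*k+2+1 = n₀+3*k+3 from by omega] at h
          rw [abs_of_nonneg h3, abs_of_neg h2] at h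
          linarith
        have req : ∀ k, u (n₀+3*(k+1)+2) = 4 * u (n₀+3*k+2) - c := by
          intro k
          obtain ⟨h1, h2, h3⟩ := struct (n₀+3*k) (pattern k)
          obtain ⟨g1, g2, g3⟩ := struct (n₀+3*(k+1)) (pattern (k+1))
          have hq := qeq k
          have h := hrec (n₀+3*k+3)
          simp only [show n₀+3*k+3+2 = n₀+3*k+5 from by omega,
            show n₀+3*k+3+1 = n₀+3*k+4 from by omega] at h
          have g1' : u (n₀+3*k+4) < 0 := by
            simpa [show n₀+3*(k+1)+1 = n₀+3*k+4 from by omega] using g1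
          rw [abs_of_neg g1', abs_of_nonneg (by simpa using h3)] at h
          simp only [show n₀+3*(k+1)+2 = n₀+3*k+5 from by omega]
          have h3' : 0 ≤ u (n₀+3*k+3) := by simpa using h3
          linarith
        have rconst : ∀ k, u (n₀+3*k+2) = c/3 := by
          set d : ℕ → ℝ := fun k => u (n₀+3*k+2) - c/3 with hd
          have hd4 : ∀ k, d (k+1) = 4 * d k := by
            intro k
            simp only [hd]
            have := req k
            linarith
          have hdpow : ∀ j k, d (k+j) = 4^j * d k := by
            intro j
            induction j with
            | zero => intro k; simp
            | succ j ih =>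
              intro k
              have e : k + (j+1) = (k+j) + 1 := by omega
              rw [e, hd4, ih]
              ring
          have hdper : ∀ k, d (k+N) = d k := by
            intro k
            simp only [hd]
            have e : n₀+3*(k+N)+2 = (n₀+3*k+2) + 3*N := by ring
            rw [e, perk u N hper 3]
          intro k
          have h1 : d (k+N) = 4^N * d k := hdpow N k
          rw [hdper] at h1
          have h4 : (1:ℝ) < 4^N := by
            calc (1:ℝ) < 4 := by norm_num
            _ = 4^1 := by norm_num
            _ ≤ 4^N := pow_le_pow_right₀ (by norm_num) hN
          have : d k = 0 := by nlinarith [h1]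
          simp only [hd] at this
          linarith
        have qconst : ∀ k, u (n₀+3*k+4) = c/3 := by
          intro k
          rw [qeq k, rconst k]
          ring
        have pconst : ∀ k, u (n₀+3*k+6) = -c/3 := by
          intro k
          have h := hrec (n₀+3*k+4)
          simp only [show n₀+3*k+4+2 = n₀+3*k+6 from by omega,
            show n₀+3*k+4+1 = n₀+3*k+5 from by omega] at h
          have h5 : u (n₀+3*k+5) = c/3 := by
            have := rconst (k+1)
            simpa [show n₀+3*(k+1)+2 = n₀+3*k+5 from by omega] using this
          rw [h5, qconst k, abs_of_neg (by linarith : c/3 < 0)] at h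
          linarith
        have htail : ∀ k, u ((n₀+4) + 3*k) = c/3 ∧ u ((n₀+4) + 3*k + 1) = c/3
            ∧ u ((n₀+4) + 3*k + 2) = -c/3 := by
          intro k
          refine ⟨?_, ?_, ?_⟩
          · have := qconst k; simpa [show n₀+3*k+4 = n₀+4+3*k from by omega] using this
          · have := rconst (k+1)
            simpa [show n₀+3*(k+1)+2 = n₀+4+3*k+1 from by omega] using this
          · have := pconst k; simpa [show n₀+3*k+6 = n₀+4+3*k+2 from by omega] using this
        obtain ⟨g3, gp⟩ := tail_classify u N hN hper (n₀+4) (c/3) (c/3) (-c/3) htail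
        refine ⟨g3, Or.inr ⟨hc, ?_⟩⟩
        rcases gp with ⟨a1, a2⟩ | ⟨a1, a2⟩ | ⟨a1, a2⟩
        · exact Or.inr (Or.inr (Or.inr (Or.inr (Or.inl ⟨a1, a2⟩))))
        · exact Or.inr (Or.inr (Or.inr (Or.inr (Or.inr (Or.inl ⟨a1, a2⟩)))))
        · exact Or.inr (Or.inr (Or.inr (Or.inl ⟨a1, a2⟩)))
    · -- all negative : constant c/5
      push_neg at hpos
      set w : ℕ → ℝ := fun n => u n - c/5 with hw
      have hweq : ∀ n, w (n + 2) = -2 * w (n + 1) - 2 * w n := by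
        intro n
        have h := hrec n
        rw [abs_of_neg (hpos (n+1)), abs_of_neg (hpos n)] at h
        simp only [hw]
        linarith
      have hwper : ∀ n, w (n + N) = w n := by
        intro n
        simp only [hw, hper]
      have hz := allneg w N hN hweq hwper
      have hu : ∀ n, u n = c/5 := by
        intro n
        have := hz n
        simp only [hw] at this
        linarith
      exact ⟨fun n => by rw [hu, hu], Or.inr ⟨hc, Or.inr (Or.inr (Or.inr (Or.inr (Or.inr
        (Or.inr ⟨hu 0, hu 1⟩)))))⟩⟩

lemma mem_R (a b : ℝ) (q : ℝ × ℝ) : a - b ≤ (F a b q).1 - (F a b q).2 := by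
  have h1 := le_abs_self q.1
  have h2 := le_abs_self q.2
  show a - b ≤ (|q.1| - q.2 + a) - (q.1 - |q.2| + b)
  linarith

lemma iter3_snd (a b : ℝ) (q : ℝ × ℝ) : ((F a b)^[3] q).2 =
    (|(|q.1| - q.2 + a)| - (q.1 - |q.2| + b) + a)
      - |((|q.1| - q.2 + a) - |(q.1 - |q.2| + b)| + b)| + b := rfl

lemma ynonneg (a b : ℝ) (ha : 0 ≤ a) (p : ℝ × ℝ) (N : ℕ) (hN : 1 ≤ N)
    (hp : (F a b)^[N] p = p) : 0 ≤ p.2 := by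
  have hR : ∀ n, a - b ≤ ((F a b)^[n] p).1 - ((F a b)^[n] p).2 := by
    intro n
    rcases n with _ | m
    · obtain ⟨M, rfl⟩ : ∃ M, N = M + 1 := ⟨N - 1, by omega⟩
      have h : p = F a b ((F a b)^[M] p) := by
        conv_lhs => rw [← hp, Function.iterate_succ_apply']
      rw [Function.iterate_zero_apply, h]
      exact mem_R a b _
    · rw [Function.iterate_succ_apply']
      exact mem_R a b _
  have key : ∀ q : ℝ × ℝ, a - b ≤ q.1 - q.2 →
      (0 ≤ q.2 → 0 ≤ ((F a b)^[3] q).2) ∧ (q.2 < 0 → q.2 < ((F a b)^[3] q).2) := by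
    intro q hq
    rw [iter3_snd]
    exact key3 a b q.1 q.2 ha hq
  by_contra hneg
  push_neg at hneg
  set m : ℕ → ℝ := fun k => min (((F a b)^[3*k] p).2) 0 with hm
  have hstep : ∀ k, (F a b)^[3*(k+1)] p = (F a b)^[3] ((F a b)^[3*k] p) := by
    intro k
    rw [← Function.iterate_add_apply]
    congr 1
    omega
  have hmono : ∀ k, m k ≤ m (k+1) := by
    intro k
    have hq := hR (3*k)
    rcases le_or_gt 0 (((F a b)^[3*k] p).2) with h | h
    · have h2 := (key _ hq).1 h
      simp only [hm, hstep k]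
      rw [min_eq_right h, min_eq_right h2]
    · have h2 := (key _ hq).2 h
      simp only [hm, hstep k]
      rw [min_eq_left h.le]
      exact le_min h2.le h.le
  have hstrict : m 0 < m 1 := by
    have hq := hR 0
    simp only [Function.iterate_zero_apply] at hq
    have h2 := (key p hq).2 hneg
    simp only [hm, hstep 0, Nat.mul_zero, Function.iterate_zero_apply]
    rw [min_eq_left hneg.le]
    exact lt_min h2 hneg
  have hchain : ∀ k, m 1 ≤ m (k+1) := by
    intro k
    induction k with
    | zero => exact le_refl _
    | succ k ih => exact le_trans ih (hmono (k+1))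
  have hNN : (F a b)^[3*N] p = p := by
    have e : 3*N = N + (N + N) := by ring
    rw [e, Function.iterate_add_apply, Function.iterate_add_apply, hp, hp, hp]
  have hmN : m N = m 0 := by
    simp only [hm, hNN, Nat.mul_zero, Function.iterate_zero_apply]
  obtain ⟨M, rfl⟩ : ∃ M, N = M + 1 := ⟨N - 1, by omega⟩
  have := hchain M
  rw [hmN] at this
  linarith

lemma main_lemma (a b : ℝ) (ha : 0 ≤ a) (p : ℝ × ℝ) (N : ℕ) (hN : 1 ≤ N)
    (hp : (F a b)^[N] p = p) :
    (F a b)^[3] p = p ∧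
    (p = (2*a-b, a) ∨ p = (b-2*a, a) ∨ p = (b-2*a, 2*b-3*a) ∨
     p = ((b-2*a)/3, (2*b-a)/3) ∨ p = ((2*a-b)/3, (2*b-a)/3) ∨ p = ((2*a-b)/3, a) ∨
     p = ((2*a-b)/5, (a+2*b)/5)) := by
  set u : ℕ → ℝ := fun n => ((F a b)^[n] p).1 with hu
  set Y : ℕ → ℝ := fun n => ((F a b)^[n] p).2 with hY
  have hux : ∀ n, u (n+1) = |u n| - Y n + a := by
    intro n
    simp only [hu, hY]
    rw [Function.iterate_succ_apply']
    rfl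
  have hYx : ∀ n, Y (n+1) = u n - |Y n| + b := by
    intro n
    simp only [hu, hY]
    rw [Function.iterate_succ_apply']
    rfl
  have hyid : ∀ n, Y n = |u n| + a - u (n+1) := by
    intro n
    have := hux n
    linarith
  have hiter_per : ∀ n, (F a b)^[N] ((F a b)^[n] p) = (F a b)^[n] p := by
    intro n
    rw [← Function.iterate_add_apply, Nat.add_comm, Function.iterate_add_apply, hp]
  have hYnn : ∀ n, 0 ≤ Y n := fun n => ynonneg a b ha _ N hN (hiter_per n)
  have hper : ∀ n, u (n + N) = u n := by
    intro n
    simp only [hu]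
    rw [Function.iterate_add_apply, hp]
  have hrec : ∀ n, u (n+2) = |u (n+1)| - u (n+1) + |u n| - u n + (2*a - b) := by
    intro n
    have h1 : u (n+2) = |u (n+1)| - Y (n+1) + a := by
      have := hux (n+1)
      simpa [show n+1+1 = n+2 from by omega] using this
    have h2 := hYx n
    have h3 := hyid n
    rw [abs_of_nonneg (hYnn n)] at h2
    linarith
  obtain ⟨h3per, hcases⟩ := useq (2*a - b) u N hN hrec hper
  have mk : ∀ X Z : ℝ, p.1 = X → p.2 = Z → p = (X, Z) := by
    intro X Z h1 h2
    rw [← h1, ← h2]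
  have hY0 : p.2 = |p.1| + a - u 1 := hyid 0
  constructor
  · have e1 : u 3 = u 0 := by simpa using h3per 0
    have e2 : u 4 = u 1 := by simpa using h3per 1
    have eY : Y 3 = Y 0 := by
      have i3 := hyid 3
      have i0 := hyid 0
      norm_num at i3 i0
      rw [i3, i0, e1, e2]
    exact Prod.ext (e1 : ((F a b)^[3] p).1 = p.1) (eY : ((F a b)^[3] p).2 = p.2)
  · rcases hcases with ⟨hc0, h0, h1⟩ | ⟨hcneg, hh⟩
    · have hp1 : p.1 = 2*a-b := h0
      have hq1 : u 1 = 2*a-b := h1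
      have habs : |p.1| = p.1 := abs_of_nonneg (by rw [hp1]; linarith)
      refine Or.inl (mk _ _ hp1 ?_)
      rw [hY0, habs]
      linarith
    · have hcn : 2*a - b < 0 := hcneg
      rcases hh with ⟨h0, h1⟩ | ⟨h0, h1⟩ | ⟨h0, h1⟩ | ⟨h0, h1⟩ | ⟨h0, h1⟩ | ⟨h0, h1⟩ | ⟨h0, h1⟩
      · have hp1 : p.1 = 2*a-b := h0
        have hq1 : u 1 = -(2*a-b) := h1
        have habs : |p.1| = -p.1 := abs_of_neg (by rw [hp1]; linarith)
        refine Or.inl (mk _ _ hp1 ?_)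
        rw [hY0, habs]
        linarith
      · have hp1 : p.1 = -(2*a-b) := h0
        have hq1 : u 1 = -(2*a-b) := h1
        have habs : |p.1| = p.1 := abs_of_nonneg (by rw [hp1]; linarith)
        refine Or.inr (Or.inl (mk _ _ (by linarith) ?_))
        rw [hY0, habs]
        linarith
      · have hp1 : p.1 = -(2*a-b) := h0
        have hq1 : u 1 = 2*a-b := h1
        have habs : |p.1| = p.1 := abs_of_nonneg (by rw [hp1]; linarith)
        refine Or.inr (Or.inr (Or.inl (mk _ _ (by linarith) ?_)))
        rw [hY0, habs]
        linarith
      · have hp1 : p.1 = -(2*a-b)/3 := h0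
        have hq1 : u 1 = (2*a-b)/3 := h1
        have habs : |p.1| = p.1 := abs_of_nonneg (by rw [hp1]; linarith)
        refine Or.inr (Or.inr (Or.inr (Or.inl (mk _ _ (by linarith) ?_))))
        rw [hY0, habs]
        linarith
      · have hp1 : p.1 = (2*a-b)/3 := h0
        have hq1 : u 1 = (2*a-b)/3 := h1
        have habs : |p.1| = -p.1 := abs_of_neg (by rw [hp1]; linarith)
        refine Or.inr (Or.inr (Or.inr (Or.inr (Or.inl (mk _ _ hp1 ?_)))))
        rw [hY0, habs]
        linarith
      · have hp1 : p.1 = (2*a-b)/3 := h0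
        have hq1 : u 1 = -(2*a-b)/3 := h1
        have habs : |p.1| = -p.1 := abs_of_neg (by rw [hp1]; linarith)
        refine Or.inr (Or.inr (Or.inr (Or.inr (Or.inr (Or.inl (mk _ _ hp1 ?_))))))
        rw [hY0, habs]
        linarith
      · have hp1 : p.1 = (2*a-b)/5 := h0
        have hq1 : u 1 = (2*a-b)/5 := h1
        have habs : |p.1| = -p.1 := abs_of_neg (by rw [hp1]; linarith)
        refine Or.inr (Or.inr (Or.inr (Or.inr (Or.inr (Or.inr (mk _ _ hp1 ?_))))))
        rw [hY0, habs]
        linarith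

lemma fixed_exu (a b : ℝ) (ha : 0 ≤ a) : ∃! p : ℝ × ℝ, F a b p = p := by
  refine ⟨if b ≤ 2*a then ((2*a-b, a) : ℝ × ℝ) else (((2*a-b)/5, (a+2*b)/5) : ℝ × ℝ), ?_, ?_⟩
  · split_ifs with hb
    · show ((|2*a-b| - a + a, 2*a-b - |a| + b) : ℝ × ℝ) = (2*a-b, a)
      rw [abs_of_nonneg (by linarith : (0:ℝ) ≤ 2*a-b), abs_of_nonneg ha]
      norm_num [Prod.ext_iff]
      ring
    · push_neg at hb
      show ((|(2*a-b)/5| - (a+2*b)/5 + a, (2*a-b)/5 - |(a+2*b)/5| + b) : ℝ × ℝ) = _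
      rw [abs_of_neg (by linarith : (2*a-b)/5 < 0),
        abs_of_nonneg (by linarith : (0:ℝ) ≤ (a+2*b)/5)]
      norm_num [Prod.ext_iff]
      constructor <;> ring
  · intro q hq
    have h1 : |q.1| - q.2 + a = q.1 := congrArg Prod.fst hq
    have h2 : q.1 - |q.2| + b = q.2 := congrArg Prod.snd hq
    have mk : ∀ X Z : ℝ, q.1 = X → q.2 = Z → q = (X, Z) := by
      intro X Z e1 e2
      rw [← e1, ← e2]
    rcases abs_cases q.1 with ⟨e1, s1⟩ | ⟨e1, s1⟩ <;>
        rcases abs_cases q.2 with ⟨e2, s2⟩ | ⟨e2, s2⟩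
    · rw [e1] at h1
      rw [e2] at h2
      rw [if_pos (by linarith : b ≤ 2*a)]
      exact mk _ _ (by linarith) (by linarith)
    · rw [e1] at h1
      linarith
    · rw [e1] at h1
      rw [e2] at h2
      rw [if_neg (by intro h; linarith : ¬ b ≤ 2*a)]
      exact mk _ _ (by linarith) (by linarith)
    · rw [e1] at h1
      rw [e2] at h2
      linarith

/-- For `a ≥ 0`: `F_{a,b}` has exactly one fixed point, every periodic point `p`
satisfies `F^[3] p = p` (so every periodic orbit has minimal period 1 or 3), and the
set of all periodic points has at most 7 elements. -/
theorem periodic_points_of_nonneg (a b : ℝ) (ha : 0 ≤ a) :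
    (∃! p : ℝ × ℝ, F a b p = p) ∧
    (∀ p : ℝ × ℝ, (∃ n : ℕ, 1 ≤ n ∧ (F a b)^[n] p = p) → (F a b)^[3] p = p) ∧
    {p : ℝ × ℝ | ∃ n : ℕ, 1 ≤ n ∧ (F a b)^[n] p = p}.Finite ∧
    {p : ℝ × ℝ | ∃ n : ℕ, 1 ≤ n ∧ (F a b)^[n] p = p}.ncard ≤ 7 := by
  have hsub : {p : ℝ × ℝ | ∃ n : ℕ, 1 ≤ n ∧ (F a b)^[n] p = p} ⊆
      ({(2*a-b, a), (b-2*a, a), (b-2*a, 2*b-3*a), ((b-2*a)/3, (2*b-a)/3),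
        ((2*a-b)/3, (2*b-a)/3), ((2*a-b)/3, a), ((2*a-b)/5, (a+2*b)/5)} : Set (ℝ × ℝ)) := by
    rintro p ⟨n, hn, hfix⟩
    have := (main_lemma a b ha p n hn hfix).2
    simpa [Set.mem_insert_iff] using this
  have hTfin : ({(2*a-b, a), (b-2*a, a), (b-2*a, 2*b-3*a), ((b-2*a)/3, (2*b-a)/3),
      ((2*a-b)/3, (2*b-a)/3), ((2*a-b)/3, a), ((2*a-b)/5, (a+2*b)/5)} : Set (ℝ × ℝ)).Finite :=
    Set.Finite.insert _ (Set.Finite.insert _ (Set.Finite.insert _ (Set.Finite.insert _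
      (Set.Finite.insert _ (Set.Finite.insert _ (Set.finite_singleton _))))))
  refine ⟨fixed_exu a b ha, ?_, ?_, ?_⟩
  · rintro p ⟨n, hn, hfix⟩
    exact (main_lemma a b ha p n hn hfix).1
  · exact hTfin.subset hsub
  · refine le_trans (Set.ncard_le_ncard hsub hTfin) ?_
    refine le_trans (Set.ncard_insert_le _ _) ?_
    refine le_trans (Nat.add_le_add_right (Set.ncard_insert_le _ _) 1) ?_
    refine le_trans (Nat.add_le_add_right (Nat.add_le_add_right (Set.ncard_insert_le _ _) 1) 1) ?_
    refine le_trans (Nat.add_le_add_right (Nat.add_le_add_right (Nat.add_le_add_right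
      (Set.ncard_insert_le _ _) 1) 1) 1) ?_
    refine le_trans (Nat.add_le_add_right (Nat.add_le_add_right (Nat.add_le_add_right
      (Nat.add_le_add_right (Set.ncard_insert_le _ _) 1) 1) 1) 1) ?_
    refine le_trans (Nat.add_le_add_right (Nat.add_le_add_right (Nat.add_le_add_right
      (Nat.add_le_add_right (Nat.add_le_add_right (Set.ncard_insert_le _ _) 1) 1) 1) 1) 1) ?_
    simp [Set.ncard_singleton]
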